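/- Let X and Y be topological spaces, (Z, λ) an equiconnected space, (I, ≤) a well-ordered set, (f_i)_{i∈I} a family of continuous maps f_i : Y → Z, and (φ_i)_{i∈I} a locally finite partition of unity on X. Then the mapping f : X × Y → Z given by f(x,y) = Σ^λ_{i∈I} φ_i(x) f_i(y) is continuous. -/

import Mathlib

open Set Function Filter Topology

universe u

/-- An *equiconnecting* map on `Z`: a map `λ : Z × Z × [0,1] → Z`, continuous on
`Z × Z × [0,1]`, with `λ(x,y,0) = x`, `λ(x,y,1) = y` and `λ(x,x,t) = x`. -/
structure IsEquiconnecting {Z : Type*} [TopologicalSpace Z] (lam : Z → Z → ℝ → Z) : Prop where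
  continuousOn : ContinuousOn (fun p : Z × Z × ℝ => lam p.1 p.2.1 p.2.2)
    (Set.univ ×ˢ Set.univ ×ˢ Set.Icc (0 : ℝ) 1)
  map_zero : ∀ x y : Z, lam x y 0 = x
  map_one : ∀ x y : Z, lam x y 1 = y
  map_diag : ∀ x : Z, ∀ t ∈ Set.Icc (0 : ℝ) 1, lam x x t = x

/-- `lambdaIter lam n` is the map `λ_{n+1} : Z^{n+1} × S_{n+1} → Z` from the paper,
defined recursively. -/
noncomputable def lambdaIter {Z : Type*} (lam : Z → Z → ℝ → Z) :
    (n : ℕ) → (Fin (n + 1) → Z) → (Fin (n + 1) → ℝ) → Z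
  | 0, x, _ => x 0
  | n + 1, x, a =>
      if 0 < a 0 + a 1 then
        lambdaIter lam n
          (Fin.cons (lam (x 0) (x 1) (a 1 / (a 0 + a 1))) fun i => x i.succ.succ)
          (Fin.cons (a 0 + a 1) fun i => a i.succ.succ)
      else
        lambdaIter lam n (fun i => x i.succ) fun i => a i.succ

/-- `lambdaIterSet lam A n` is the set `λ^n(A)`:  `λ^0(A) = A` and
`λ^{n+1}(A) = λ(λ^n(A) × A × [0,1])`. -/
def lambdaIterSet {Z : Type*} (lam : Z → Z → ℝ → Z) (A : Set Z) : ℕ → Set Z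
  | 0 => A
  | n + 1 => (fun p : Z × Z × ℝ => lam p.1 p.2.1 p.2.2) ''
      (lambdaIterSet lam A n ×ˢ A ×ˢ Set.Icc (0 : ℝ) 1)

/-- `λ^∞(A) = ⋃_{n ≥ 1} λ^n(A)`. -/
def lambdaInftySet {Z : Type*} (lam : Z → Z → ℝ → Z) (A : Set Z) : Set Z :=
  ⋃ n : ℕ, lambdaIterSet lam A (n + 1)

/-- An equiconnected space `(Z, λ)` is locally convex if every point has arbitrarily small
neighborhoods `V` with `λ^∞(V)` inside a given neighborhood. -/
def IsLocallyConvexEquiconnected {Z : Type*} [TopologicalSpace Z] (lam : Z → Z → ℝ → Z) :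
    Prop :=
  ∀ z : Z, ∀ U ∈ nhds z, ∃ V ∈ nhds z, lambdaInftySet lam V ⊆ U

/-- A map is Baire-one if it is the pointwise limit of a sequence of continuous maps. -/
def BaireOne {Y Z : Type*} [TopologicalSpace Y] [TopologicalSpace Z] (g : Y → Z) : Prop :=
  ∃ h : ℕ → Y → Z, (∀ n, Continuous (h n)) ∧
    ∀ y, Filter.Tendsto (fun n => h n y) Filter.atTop (nhds (g y))

/-- A locally finite partition of unity on `X`: continuous `[0,1]`-valued functions whose
supports (closures of the sets where they are nonzero) form a locally finite family and whose
pointwise sum is `1`. -/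
def IsLocFinPartitionOfUnity {I X : Type*} [TopologicalSpace X] (φ : I → X → ℝ) : Prop :=
  (∀ i, Continuous (φ i)) ∧ (∀ i x, φ i x ∈ Set.Icc (0 : ℝ) 1) ∧
    (LocallyFinite fun i => closure (Function.support (φ i))) ∧ ∀ x, ∑ᶠ i, φ i x = 1

/-- A strong PP-space: for every dense `D ⊆ X` there are a sequence of locally finite
partitions of unity and families of points of `D` such that points attached to the supports
containing `x` converge to `x` uniformly in the index, in the sense of condition (3). -/
def IsStrongPPSpace (X : Type*) [TopologicalSpace X] : Prop :=
  ∀ D : Set X, Dense D →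
    ∃ (I : ℕ → Type u) (φ : ∀ n, I n → X → ℝ) (p : ∀ n, I n → X),
      (∀ n, IsLocFinPartitionOfUnity (φ n)) ∧ (∀ n i, p n i ∈ D) ∧
      ∀ x : X, ∀ U ∈ nhds x, ∃ n₀ : ℕ, ∀ n ≥ n₀, ∀ i : I n,
        x ∈ closure (Function.support (φ n i)) → p n i ∈ U

/-- A zero set: the preimage of `{0}` under a continuous function `X → [0,1]`. -/
def IsZeroSet {X : Type*} [TopologicalSpace X] (A : Set X) : Prop :=
  ∃ f : X → ℝ, Continuous f ∧ (∀ x, f x ∈ Set.Icc (0 : ℝ) 1) ∧ A = f ⁻¹' {0}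

/-- A cozero set: the preimage of `(0,1]` under a continuous function `X → [0,1]`. -/
def IsCozeroSet {X : Type*} [TopologicalSpace X] (A : Set X) : Prop :=
  ∃ f : X → ℝ, Continuous f ∧ (∀ x, f x ∈ Set.Icc (0 : ℝ) 1) ∧ A = f ⁻¹' Set.Ioc (0 : ℝ) 1

/-- A functionally ambiguous set: simultaneously a countable union of zero sets and a
countable intersection of cozero sets. -/
def IsFunctionallyAmbiguous {X : Type*} [TopologicalSpace X] (A : Set X) : Prop :=
  (∃ F : ℕ → Set X, (∀ n, IsZeroSet (F n)) ∧ A = ⋃ n, F n) ∧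
    ∃ B : ℕ → Set X, (∀ n, IsCozeroSet (B n)) ∧ A = ⋂ n, B n

/-- A discrete family of sets: every point has a neighborhood meeting at most one member. -/
def IsDiscreteFamily {I X : Type*} [TopologicalSpace X] (A : I → Set X) : Prop :=
  ∀ x : X, ∃ U ∈ nhds x, {i : I | (U ∩ A i).Nonempty}.Subsingleton

/-- Weakly collectionwise normal: every discrete family of zero sets can be separated by a
discrete family of cozero sets. -/
def WeaklyCollectionwiseNormal (X : Type*) [TopologicalSpace X] : Prop :=
  ∀ (S : Type u) (F : S → Set X), (∀ s, IsZeroSet (F s)) → IsDiscreteFamily F →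
    ∃ U : S → Set X, (∀ s, IsCozeroSet (U s)) ∧ IsDiscreteFamily U ∧ ∀ s, F s ⊆ U s

/-- A contracting structure on `Z`: a continuous `γ : Z × [0,1] → Z` with `γ(z,0) = z` and
`γ(z,1) = z₀`. -/
structure IsContracting {Z : Type*} [TopologicalSpace Z] (γ : Z → ℝ → Z) (z₀ : Z) :
    Prop where
  continuousOn : ContinuousOn (fun p : Z × ℝ => γ p.1 p.2) (Set.univ ×ˢ Set.Icc (0 : ℝ) 1)
  map_zero : ∀ z : Z, γ z 0 = z
  map_one : ∀ z : Z, γ z 1 = z₀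

section Aux
variable {Z : Type*} {lam : Z → Z → ℝ → Z}

lemma lambdaIter_succ_def (n : ℕ) (x : Fin (n+2) → Z) (a : Fin (n+2) → ℝ) :
    lambdaIter lam (n+1) x a =
      if 0 < a 0 + a 1 then
        lambdaIter lam n
          (Fin.cons (lam (x 0) (x 1) (a 1 / (a 0 + a 1))) fun i => x i.succ.succ)
          (Fin.cons (a 0 + a 1) fun i => a i.succ.succ)
      else lambdaIter lam n (fun i => x i.succ) fun i => a i.succ := rfl

lemma lambdaIter_delete_zero (h1 : ∀ x y, lam x y 1 = y) (n : ℕ)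
    (x : Fin (n+2) → Z) (a : Fin (n+2) → ℝ) (ha1 : 0 ≤ a 1) (ha0 : a 0 = 0) :
    lambdaIter lam (n+1) x a = lambdaIter lam n (fun i => x i.succ) (fun i => a i.succ) := by
  rcases eq_or_lt_of_le ha1 with h | h
  · rw [lambdaIter_succ_def, if_neg (by rw [ha0, ← h]; norm_num)]
  · rw [lambdaIter_succ_def, if_pos (by rw [ha0]; simpa using h),
      ha0, zero_add, div_self (ne_of_gt h), h1]
    congr 1 <;> funext m <;>
      refine Fin.cases ?_ (fun i => ?_) m <;> simp [Fin.cons_zero, Fin.cons_succ]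

lemma lambdaIter_delete_one (h0 : ∀ x y, lam x y 0 = x) (n : ℕ)
    (x : Fin (n+2) → Z) (a : Fin (n+2) → ℝ) (ha1 : a ((0 : Fin (n+1)).succ) = 0)
    (ha0 : 0 < a 0) :
    lambdaIter lam (n+1) x a = lambdaIter lam n (x ∘ (0 : Fin (n+1)).succ.succAbove)
      (a ∘ (0 : Fin (n+1)).succ.succAbove) := by
  have h1 : a 1 = 0 := by rw [← Fin.succ_zero_eq_one]; exact ha1
  rw [lambdaIter_succ_def, if_pos (by rw [h1, add_zero]; exact ha0),
    h1, zero_div, add_zero, h0]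
  congr 1 <;> funext m <;> refine Fin.cases ?_ (fun i => ?_) m <;>
    simp [Fin.cons_zero, Fin.cons_succ, Fin.succ_succAbove_zero, Fin.succ_succAbove_succ,
      Fin.succAbove_zero]

lemma lambdaIter_delete (h0 : ∀ x y, lam x y 0 = x) (h1 : ∀ x y, lam x y 1 = y) (n : ℕ) :
    ∀ (x : Fin (n+2) → Z) (a : Fin (n+2) → ℝ), (∀ m, 0 ≤ a m) → (∑ m, a m = 1) →
    ∀ (m₀ : Fin (n+2)), a m₀ = 0 →
    lambdaIter lam (n+1) x a = lambdaIter lam n (x ∘ m₀.succAbove) (a ∘ m₀.succAbove) := by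
  induction n with
  | zero =>
    intro x a ha hs m₀ hm₀
    rcases Fin.eq_zero_or_eq_succ m₀ with rfl | ⟨m₁, rfl⟩
    · rw [Fin.succAbove_zero]
      exact lambdaIter_delete_zero h1 0 x a (ha 1) hm₀
    · obtain rfl : m₁ = 0 := Subsingleton.elim _ _
      have ha0 : 0 < a 0 := by
        rw [Fin.sum_univ_two] at hs
        have := ha 0
        have h1' : a 1 = 0 := by rw [← Fin.succ_zero_eq_one]; exact hm₀
        linarith
      exact lambdaIter_delete_one h0 0 x a hm₀ ha0
  | succ n IH =>
    intro x a ha hs m₀ hm₀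
    rcases Fin.eq_zero_or_eq_succ m₀ with rfl | ⟨m₁, rfl⟩
    · rw [Fin.succAbove_zero]
      exact lambdaIter_delete_zero h1 (n+1) x a (ha 1) hm₀
    rcases Fin.eq_zero_or_eq_succ m₁ with rfl | ⟨m₂, rfl⟩
    · -- delete position 1
      rcases eq_or_lt_of_le (ha 0) with h0' | h0'
      · -- a 0 = 0 and a 1 = 0 : use IH on both sides after dropping position 0
        have ha1 : a 1 = 0 := by rw [← Fin.succ_zero_eq_one]; exact hm₀
        rw [lambdaIter_succ_def, if_neg (by rw [← h0', ha1]; norm_num)]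
        have hsum : ∑ m, (fun i : Fin (n+2) => a i.succ) m = 1 := by
          rw [Fin.sum_univ_succ] at hs; rw [← hs, ← h0', zero_add]
        rw [IH _ _ (fun m => ha m.succ) hsum 0 hm₀, Fin.succAbove_zero]
        -- RHS
        set σ := (0 : Fin (n+2)).succ.succAbove with hσ
        have hz2 : (a ∘ σ) 0 = 0 := by
          simp only [hσ, comp_apply, Fin.succ_succAbove_zero]; exact h0'.symm
        have hsum2 : ∑ m, (a ∘ σ) m = 1 := by
          rw [Fin.sum_univ_succAbove a (0 : Fin (n+2)).succ] at hs
          rw [← hs, hm₀, zero_add]; rfl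
        rw [IH (x ∘ σ) (a ∘ σ) (fun m => ha (σ m)) hsum2 0 hz2, Fin.succAbove_zero]
        congr 1 <;> funext m <;>
          simp [hσ, comp_apply, Fin.succ_succAbove_succ, Fin.succAbove_zero]
      · exact lambdaIter_delete_one h0 (n+1) x a hm₀ h0'
    · -- delete position m₂.succ.succ
      have hσ0 : m₂.succ.succ.succAbove 0 = 0 := Fin.succ_succAbove_zero _
      have hσ1 : m₂.succ.succ.succAbove 1 = 1 := by
        rw [← Fin.succ_zero_eq_one, Fin.succ_succAbove_succ, Fin.succ_succAbove_zero]
        exact Fin.succ_zero_eq_one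
      rcases le_or_gt (a 0 + a 1) 0 with hle | hlt
      · -- branch B on both sides
        obtain ⟨h00, h10⟩ : a 0 = 0 ∧ a 1 = 0 := by
          constructor <;> [skip; skip] <;> nlinarith [ha 0, ha 1]
        rw [lambdaIter_succ_def, if_neg (by rw [h00, h10]; norm_num)]
        have hsum : ∑ m, (fun i : Fin (n+2) => a i.succ) m = 1 := by
          rw [Fin.sum_univ_succ] at hs; rw [← hs, h00, zero_add]
        have hz : (fun i => a i.succ) m₂.succ = 0 := hm₀
        rw [IH _ _ (fun m => ha m.succ) hsum m₂.succ hz]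
        rw [lambdaIter_succ_def, if_neg ?hneg]
        case hneg =>
          have e0 : (a ∘ m₂.succ.succ.succAbove) 0 = a 0 := by simp [comp_apply, hσ0]
          have e1 : (a ∘ m₂.succ.succ.succAbove) 1 = a 1 := by simp [comp_apply, hσ1]
          rw [e0, e1, h00, h10]; norm_num
        congr 1 <;> funext m <;>
          simp [comp_apply, Fin.succ_succAbove_succ]
      · -- branch A on both sides
        rw [lambdaIter_succ_def, if_pos hlt]
        set A : Fin (n+2) → ℝ := Fin.cons (a 0 + a 1) (fun i => a i.succ.succ) with hA
        set XX : Fin (n+2) → Z :=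
          Fin.cons (lam (x 0) (x 1) (a 1 / (a 0 + a 1))) (fun i => x i.succ.succ) with hX
        have hAnn : ∀ m, 0 ≤ A m := by
          intro m; refine Fin.cases ?_ (fun i => ?_) m <;>
            simp [hA, Fin.cons_zero, Fin.cons_succ]
          · positivity
          · exact ha _
        have hAsum : ∑ m, A m = 1 := by
          rw [Fin.sum_univ_succ, Fin.sum_univ_succ] at hs
          rw [Fin.sum_univ_succ]
          simp only [hA, Fin.cons_zero, Fin.cons_succ]
          rw [Fin.succ_zero_eq_one] at hs; linarith
        have hAz : A m₂.succ = 0 := by simp [hA, Fin.cons_succ]; exact hm₀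
        rw [IH XX A hAnn hAsum m₂.succ hAz]
        rw [lambdaIter_succ_def, if_pos ?hpos]
        case hpos => simpa [comp_apply, hσ0, hσ1] using hlt
        simp only [comp_apply, hσ0, hσ1]
        congr 1 <;> funext m <;> refine Fin.cases ?_ (fun i => ?_) m <;>
          simp [hX, hA, comp_apply, Fin.cons_zero, Fin.cons_succ, Fin.succ_succAbove_zero,
            Fin.succ_succAbove_succ]

lemma lambdaIter_sub (h0 : ∀ x y, lam x y 0 = x) (h1 : ∀ x y, lam x y 1 = y) (k : ℕ) :
    ∀ (l : ℕ) (x : Fin (k+1) → Z) (a : Fin (k+1) → ℝ), (∀ m, 0 ≤ a m) → (∑ m, a m = 1) →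
    ∀ (e : Fin (l+1) → Fin (k+1)), StrictMono e → (∀ m, a m ≠ 0 ↔ ∃ i, e i = m) →
    lambdaIter lam k x a = lambdaIter lam l (x ∘ e) (a ∘ e) := by
  induction k with
  | zero =>
    intro l x a _ hs e he _
    obtain rfl : l = 0 := by
      by_contra hl
      obtain ⟨l', rfl⟩ := Nat.exists_eq_succ_of_ne_zero hl
      have hlt := Fin.lt_iff_val_lt_val.mp (he (show (0 : Fin (l'+2)) < 1 by norm_num))
      have i0 := (e 0).isLt
      have i1 := (e 1).isLt
      omega
    have : e 0 = 0 := Fin.fin_one_eq_zero _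
    simp [lambdaIter, comp_apply, this]
  | succ k IH =>
    intro l x a ha hs e he hrange
    by_cases hz : ∀ m, a m ≠ 0
    · -- e is surjective, hence l = k and e = id
      have hsurj : Surjective e := fun m => (hrange m).1 (hz m)
      have hcard : l + 1 = k + 2 := by
        simpa using Fintype.card_of_bijective ⟨he.injective, hsurj⟩
      obtain rfl : l = k + 1 := by omega
      haveI inst : WellFoundedLT (Fin (k+2)) := inferInstance
      have h := @StrictMono.range_inj (Fin (k+2)) (Fin (k+2)) _ _ inst e id he strictMono_id
      obtain rfl : e = id := h.1 (by rw [hsurj.range_eq, Set.range_id])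
      rfl
    · push_neg at hz
      obtain ⟨m₀, hm₀⟩ := hz
      rw [lambdaIter_delete h0 h1 k x a ha hs m₀ hm₀]
      have hne : ∀ i, e i ≠ m₀ := by
        intro i h
        exact (hrange m₀).2 ⟨i, h⟩ hm₀
      choose e' he' using fun i => Fin.exists_succAbove_eq (hne i)
      have hmono : StrictMono e' := by
        intro i j hij
        have := he hij
        rw [← he' i, ← he' j] at this
        exact (Fin.succAboveOrderEmb m₀).strictMono.lt_iff_lt.1 this
      have hsum' : ∑ m, (a ∘ m₀.succAbove) m = 1 := by
        rw [Fin.sum_univ_succAbove a m₀] at hs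
        rw [← hs, hm₀, zero_add]; rfl
      have hrange' : ∀ m, (a ∘ m₀.succAbove) m ≠ 0 ↔ ∃ i, e' i = m := by
        intro m
        constructor
        · intro hm
          obtain ⟨i, hi⟩ := (hrange _).1 hm
          refine ⟨i, (Fin.succAboveOrderEmb m₀).injective ?_⟩
          simp only [Fin.succAboveOrderEmb_apply]
          rw [he' i]; exact hi
        · rintro ⟨i, rfl⟩
          have : a (e i) ≠ 0 := (hrange (e i)).2 ⟨i, rfl⟩
          simpa [comp_apply, he' i] using this
      rw [IH l (x ∘ m₀.succAbove) (a ∘ m₀.succAbove) (fun m => ha _) hsum' e' hmono hrange']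
      congr 1 <;> funext m <;> simp [comp_apply, he' m]

lemma fin_cons_apply_one {α : Type*} {n : ℕ} (c : α) (g : Fin (n+1) → α) :
    (Fin.cons c g : Fin (n+2) → α) 1 = g 0 := by
  rw [← Fin.succ_zero_eq_one, Fin.cons_succ]

variable [TopologicalSpace Z]

lemma lambdaIter_continuousOn (hlam : IsEquiconnecting lam) (n : ℕ) :
    ContinuousOn (fun p : (Fin (n+1) → Z) × (Fin (n+1) → ℝ) => lambdaIter lam n p.1 p.2)
      {p : (Fin (n+1) → Z) × (Fin (n+1) → ℝ) | (∀ m, 0 ≤ p.2 m) ∧ ∑ m, p.2 m = 1} := by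
  induction n with
  | zero =>
    exact ((continuous_apply (0 : Fin 1)).comp continuous_fst).continuousOn
  | succ n IH =>
    set Δ : Set ((Fin (n+2) → Z) × (Fin (n+2) → ℝ)) :=
      {p | (∀ m, 0 ≤ p.2 m) ∧ ∑ m, p.2 m = 1} with hΔ
    intro p hp
    obtain ⟨hpn, hps⟩ := hp
    rcases lt_or_ge 0 (p.2 0 + p.2 1) with hpos | hnonpos
    · -- Case A
      set O : Set ((Fin (n+2) → Z) × (Fin (n+2) → ℝ)) := {q | 0 < q.2 0 + q.2 1} with hO
      have hOopen : IsOpen O := isOpen_lt continuous_const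
        (((continuous_apply (0 : Fin (n+2))).comp continuous_snd).add
          ((continuous_apply (1 : Fin (n+2))).comp continuous_snd))
      have hOmem : O ∈ 𝓝[Δ] p := mem_nhdsWithin_of_mem_nhds (hOopen.mem_nhds hpos)
      rw [← continuousWithinAt_inter' hOmem]
      -- the inner triple map
      have c1 : ContinuousOn
          (fun q : (Fin (n+2) → Z) × (Fin (n+2) → ℝ) =>
            ((q.1 0, q.1 1, q.2 1 / (q.2 0 + q.2 1)) : Z × Z × ℝ)) (Δ ∩ O) := by
        refine (((continuous_apply (0 : Fin (n+2))).comp continuous_fst).continuousOn).prodMk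
          ((((continuous_apply (1 : Fin (n+2))).comp continuous_fst).continuousOn).prodMk ?_)
        exact ContinuousOn.div
          (((continuous_apply (1 : Fin (n+2))).comp continuous_snd).continuousOn)
          ((((continuous_apply (0 : Fin (n+2))).comp continuous_snd).add
            ((continuous_apply (1 : Fin (n+2))).comp continuous_snd)).continuousOn)
          (fun q hq => ne_of_gt hq.2)
      have c2 : ContinuousOn
          (fun q : (Fin (n+2) → Z) × (Fin (n+2) → ℝ) =>
            lam (q.1 0) (q.1 1) (q.2 1 / (q.2 0 + q.2 1))) (Δ ∩ O) := by
        refine hlam.continuousOn.comp c1 ?_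
        intro q hq
        refine ⟨mem_univ _, mem_univ _, ?_, ?_⟩
        · exact div_nonneg (hq.1.1 1) (le_of_lt hq.2)
        · exact div_le_one_of_le₀ (by have := hq.1.1 0; linarith) (le_of_lt hq.2)
      have hT : ContinuousOn
          (fun q : (Fin (n+2) → Z) × (Fin (n+2) → ℝ) =>
            ((Fin.cons (lam (q.1 0) (q.1 1) (q.2 1 / (q.2 0 + q.2 1)))
                (fun i => q.1 i.succ.succ) : Fin (n+1) → Z),
             (Fin.cons (q.2 0 + q.2 1) (fun i => q.2 i.succ.succ) : Fin (n+1) → ℝ)))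
          (Δ ∩ O) := by
        refine ContinuousOn.prodMk ?_ ?_
        · rw [continuousOn_pi]
          intro m
          refine Fin.cases ?_ (fun i => ?_) m
          · simpa only [Fin.cons_zero] using c2
          · simp only [Fin.cons_succ]
            exact ((continuous_apply _).comp continuous_fst).continuousOn
        · rw [continuousOn_pi]
          intro m
          refine Fin.cases ?_ (fun i => ?_) m
          · simp only [Fin.cons_zero]
            exact (((continuous_apply (0 : Fin (n+2))).comp continuous_snd).add
              ((continuous_apply (1 : Fin (n+2))).comp continuous_snd)).continuousOn
          · simp only [Fin.cons_succ]
            exact ((continuous_apply _).comp continuous_snd).continuousOn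
      have hmaps : MapsTo
          (fun q : (Fin (n+2) → Z) × (Fin (n+2) → ℝ) =>
            ((Fin.cons (lam (q.1 0) (q.1 1) (q.2 1 / (q.2 0 + q.2 1)))
                (fun i => q.1 i.succ.succ) : Fin (n+1) → Z),
             (Fin.cons (q.2 0 + q.2 1) (fun i => q.2 i.succ.succ) : Fin (n+1) → ℝ)))
          (Δ ∩ O)
          {p : (Fin (n+1) → Z) × (Fin (n+1) → ℝ) | (∀ m, 0 ≤ p.2 m) ∧ ∑ m, p.2 m = 1} := by
        intro q hq
        constructor
        · intro m
          refine Fin.cases ?_ (fun i => ?_) m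
          · simp only [Fin.cons_zero]
            exact add_nonneg (hq.1.1 0) (hq.1.1 1)
          · simp only [Fin.cons_succ]
            exact hq.1.1 _
        · have hqs := hq.1.2
          rw [Fin.sum_univ_succ, Fin.sum_univ_succ, Fin.succ_zero_eq_one] at hqs
          rw [Fin.sum_univ_succ]
          simp only [Fin.cons_zero, Fin.cons_succ]
          linarith
      have hcomp := (IH.comp hT hmaps) p ⟨⟨hpn, hps⟩, hpos⟩
      refine hcomp.congr (fun q hq => ?_) ?_
      · rw [lambdaIter_succ_def, if_pos (show 0 < q.2 0 + q.2 1 from hq.2)]; rfl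
      · rw [lambdaIter_succ_def, if_pos hpos]; rfl
    · -- Case B
      have h00 : p.2 0 = 0 := by nlinarith [hpn 0, hpn 1]
      have h10 : p.2 1 = 0 := by nlinarith [hpn 0, hpn 1]
      rcases n with _ | n'
      · exfalso
        rw [Fin.sum_univ_two] at hps
        linarith
      -- now vectors have length n' + 3
      set t2x : Fin (n'+1) → Z := fun i => p.1 i.succ.succ with ht2x
      set t2a : Fin (n'+1) → ℝ := fun i => p.2 i.succ.succ with ht2a
      have hv : lambdaIter lam (n'+2) p.1 p.2 = lambdaIter lam n' t2x t2a := by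
        rw [lambdaIter_succ_def, if_neg (by linarith)]
        rw [lambdaIter_delete_zero hlam.map_one n' (fun i => p.1 i.succ) (fun i => p.2 i.succ)
          (show (0:ℝ) ≤ p.2 ((1 : Fin (n'+2)).succ) from hpn _)
          (show p.2 ((0 : Fin (n'+2)).succ) = 0 by rw [Fin.succ_zero_eq_one]; exact h10)]
      show ContinuousWithinAt _ Δ p
      rw [ContinuousWithinAt, hv, tendsto_nhds]
      intro W hWopen hWmem
      -- the auxiliary map F
      set F : ((Fin (n'+3) → Z) × (Fin (n'+3) → ℝ)) × ℝ → Z := fun q =>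
        lambdaIter lam (n'+1)
          (Fin.cons (lam (q.1.1 0) (q.1.1 1) q.2) (fun i => q.1.1 i.succ.succ))
          (Fin.cons (q.1.2 0 + q.1.2 1) (fun i => q.1.2 i.succ.succ)) with hFdef
      have hF : ContinuousOn F (Δ ×ˢ Icc (0:ℝ) 1) := by
        have hS : ContinuousOn
            (fun q : ((Fin (n'+3) → Z) × (Fin (n'+3) → ℝ)) × ℝ =>
              ((Fin.cons (lam (q.1.1 0) (q.1.1 1) q.2)
                  (fun i => q.1.1 i.succ.succ) : Fin (n'+2) → Z),
               (Fin.cons (q.1.2 0 + q.1.2 1)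
                  (fun i => q.1.2 i.succ.succ) : Fin (n'+2) → ℝ)))
            (Δ ×ˢ Icc (0:ℝ) 1) := by
          refine ContinuousOn.prodMk ?_ ?_
          · rw [continuousOn_pi]
            intro m
            refine Fin.cases ?_ (fun i => ?_) m
            · simp only [Fin.cons_zero]
              have ctrip : ContinuousOn
                  (fun q : ((Fin (n'+3) → Z) × (Fin (n'+3) → ℝ)) × ℝ =>
                    ((q.1.1 0, q.1.1 1, q.2) : Z × Z × ℝ)) (Δ ×ˢ Icc (0:ℝ) 1) :=
                (((continuous_apply (0 : Fin (n'+3))).comp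
                  (continuous_fst.comp continuous_fst)).prodMk
                  ((((continuous_apply (1 : Fin (n'+3))).comp
                    (continuous_fst.comp continuous_fst))).prodMk
                    continuous_snd)).continuousOn
              exact hlam.continuousOn.comp ctrip
                (fun q hq => ⟨mem_univ _, mem_univ _, hq.2⟩)
            · simp only [Fin.cons_succ]
              exact ((continuous_apply _).comp
                (continuous_fst.comp continuous_fst)).continuousOn
          · rw [continuousOn_pi]
            intro m
            refine Fin.cases ?_ (fun i => ?_) m
            · simp only [Fin.cons_zero]
              exact (((continuous_apply (0 : Fin (n'+3))).comp
                (continuous_snd.comp continuous_fst)).add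
                ((continuous_apply (1 : Fin (n'+3))).comp
                  (continuous_snd.comp continuous_fst))).continuousOn
            · simp only [Fin.cons_succ]
              exact ((continuous_apply _).comp
                (continuous_snd.comp continuous_fst)).continuousOn
        refine IH.comp hS ?_
        intro q hq
        constructor
        · intro m
          refine Fin.cases ?_ (fun i => ?_) m
          · simp only [Fin.cons_zero]
            exact add_nonneg (hq.1.1 0) (hq.1.1 1)
          · simp only [Fin.cons_succ]
            exact hq.1.1 _
        · have hqs := hq.1.2
          rw [Fin.sum_univ_succ, Fin.sum_univ_succ, Fin.succ_zero_eq_one] at hqs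
          rw [Fin.sum_univ_succ]
          simp only [Fin.cons_zero, Fin.cons_succ]
          linarith
      -- value of F at ((p), t)
      have hFp : ∀ t : ℝ, F ((p.1, p.2), t) = lambdaIter lam n' t2x t2a := by
        intro t
        show lambdaIter lam (n'+1)
          (Fin.cons (lam (p.1 0) (p.1 1) t) (fun i => p.1 i.succ.succ))
          (Fin.cons (p.2 0 + p.2 1) (fun i => p.2 i.succ.succ)) = _
        rw [lambdaIter_delete_zero hlam.map_one n'
          (Fin.cons (lam (p.1 0) (p.1 1) t) (fun i => p.1 i.succ.succ))
          (Fin.cons (p.2 0 + p.2 1) (fun i => p.2 i.succ.succ))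
          (by rw [fin_cons_apply_one]; exact hpn _)
          (by rw [Fin.cons_zero, h00, h10, add_zero])]
        congr 1 <;> funext i <;> simp [Fin.cons_succ, ht2x, ht2a]
      -- tube argument
      have key : ∀ t : Icc (0:ℝ) 1,
          ∃ (A : Set ((Fin (n'+3) → Z) × (Fin (n'+3) → ℝ))) (B : Set ℝ),
            IsOpen A ∧ p ∈ A ∧ IsOpen B ∧ (t : ℝ) ∈ B ∧
            ∀ q s', q ∈ A → q ∈ Δ → s' ∈ B → s' ∈ Icc (0:ℝ) 1 → F (q, s') ∈ W := by
        rintro ⟨t, ht⟩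
        have hcwa : ContinuousWithinAt F (Δ ×ˢ Icc (0:ℝ) 1) (p, t) :=
          hF (p, t) ⟨⟨hpn, hps⟩, ht⟩
        have hWF : W ∈ 𝓝 (F (p, t)) := by
          rw [show F (p, t) = lambdaIter lam n' t2x t2a from hFp t]
          exact hWopen.mem_nhds hWmem
        have hpre := mem_map.1 (hcwa hWF)
        rw [mem_nhdsWithin] at hpre
        obtain ⟨G, hGopen, hGmem, hGsub⟩ := hpre
        obtain ⟨A, B, hAopen, hpA, hBopen, htB, hABsub⟩ :=
          mem_nhds_prod_iff'.1 (hGopen.mem_nhds hGmem)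
        refine ⟨A, B, hAopen, hpA, hBopen, htB, ?_⟩
        intro q s' hqA hqΔ hsB hsI
        exact hGsub ⟨hABsub ⟨hqA, hsB⟩, hqΔ, hsI⟩
      choose A B hAopen hpA hBopen htB hprop using key
      obtain ⟨fs, hfs⟩ := (isCompact_Icc (a := (0:ℝ)) (b := 1)).elim_finite_subcover B
        hBopen (fun s' hs' => mem_iUnion.2 ⟨⟨s', hs'⟩, htB _⟩)
      set AA := ⋂ i ∈ fs, A i with hAA
      have hAAopen : IsOpen AA := isOpen_biInter_finset (fun i _ => hAopen i)
      have hpAA : p ∈ AA := mem_iInter₂.2 fun i _ => hpA i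
      rw [mem_nhdsWithin]
      refine ⟨AA, hAAopen, hpAA, ?_⟩
      rintro q ⟨hqAA, hqΔ⟩
      have hmem : ∀ s' ∈ Icc (0:ℝ) 1, F (q, s') ∈ W := by
        intro s' hs'
        obtain ⟨i, hi⟩ := mem_iUnion₂.1 (hfs hs')
        exact hprop i q s' (mem_iInter₂.1 hqAA i hi.1) hqΔ hi.2 hs'
      rcases lt_or_ge 0 (q.2 0 + q.2 1) with hqpos | hqnp
      · have hval : lambdaIter lam (n'+2) q.1 q.2 = F (q, q.2 1 / (q.2 0 + q.2 1)) := by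
          rw [lambdaIter_succ_def, if_pos hqpos]
        rw [mem_preimage, hval]
        exact hmem _ ⟨div_nonneg (hqΔ.1 1) (le_of_lt hqpos),
          div_le_one_of_le₀ (by have := hqΔ.1 0; linarith) (le_of_lt hqpos)⟩
      · have hq00 : q.2 0 = 0 := by nlinarith [hqΔ.1 0, hqΔ.1 1]
        have hq10 : q.2 1 = 0 := by nlinarith [hqΔ.1 0, hqΔ.1 1]
        have hval : lambdaIter lam (n'+2) q.1 q.2 = F (q, 0) := by
          rw [lambdaIter_succ_def, if_neg (by linarith)]
          rw [lambdaIter_delete_zero hlam.map_one n' (fun i => q.1 i.succ)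
            (fun i => q.2 i.succ)
            (show (0:ℝ) ≤ q.2 ((1 : Fin (n'+2)).succ) from hqΔ.1 _)
            (show q.2 ((0 : Fin (n'+2)).succ) = 0 by rw [Fin.succ_zero_eq_one]; exact hq10)]
          show _ = lambdaIter lam (n'+1)
            (Fin.cons (lam (q.1 0) (q.1 1) (0:ℝ)) (fun i => q.1 i.succ.succ))
            (Fin.cons (q.2 0 + q.2 1) (fun i => q.2 i.succ.succ))
          rw [lambdaIter_delete_zero hlam.map_one n'
            (Fin.cons (lam (q.1 0) (q.1 1) (0:ℝ)) (fun i => q.1 i.succ.succ))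
            (Fin.cons (q.2 0 + q.2 1) (fun i => q.2 i.succ.succ))
            (by rw [fin_cons_apply_one]; exact hqΔ.1 _)
            (by rw [Fin.cons_zero, hq00, hq10, add_zero])]
          congr 1
        rw [mem_preimage, hval]
        exact hmem 0 ⟨le_refl 0, zero_le_one⟩

end Aux

/-- If `(Z, λ)` is an equiconnected space, `(I, ≤)` a well-ordered set,
`(f_i)` a family of continuous maps `Y → Z` and `(φ_i)` a locally finite partition of unity
on `X`, then `f(x,y) = Σ^λ_{i∈I} φ_i(x) f_i(y)` is continuous.  The λ-sum is encoded by the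
hypothesis `hf`: whenever `j : Fin (k+1) → I` is the increasing enumeration of the (finite,
nonempty) support `{i | φ_i(x) ≠ 0}`, then
`f(x,y) = λ_{k+1}(f_{j 0}(y),…,f_{j k}(y), φ_{j 0}(x),…,φ_{j k}(x))`. -/
theorem continuous_lambdaSum_of_partitionOfUnity {X Y Z I : Type*} [TopologicalSpace X]
    [TopologicalSpace Y] [TopologicalSpace Z] [LinearOrder I] [WellFoundedLT I]
    (lam : Z → Z → ℝ → Z) (hlam : IsEquiconnecting lam)
    (g : I → Y → Z) (hg : ∀ i, Continuous (g i))
    (φ : I → X → ℝ) (hφ : IsLocFinPartitionOfUnity φ)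
    (f : X × Y → Z)
    (hf : ∀ (x : X) (y : Y) (k : ℕ) (j : Fin (k + 1) → I), StrictMono j →
      (∀ m, φ (j m) x ≠ 0) → (∀ i, φ i x ≠ 0 → ∃ m, j m = i) →
      f (x, y) = lambdaIter lam k (fun m => g (j m) y) fun m => φ (j m) x) :
    Continuous f := by
  obtain ⟨hφc, hφ01, hφlf, hφsum⟩ := hφ
  rw [continuous_iff_continuousAt]
  rintro ⟨x₀, y₀⟩
  obtain ⟨U, hU, hUfin⟩ := hφlf x₀
  set J : Finset I := hUfin.toFinset with hJ
  have hsub : ∀ x ∈ U, ∀ i, φ i x ≠ 0 → i ∈ J := by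
    intro x hx i hi
    rw [hJ, Set.Finite.mem_toFinset]
    exact ⟨x, subset_closure hi, hx⟩
  have hx₀U : x₀ ∈ U := mem_of_mem_nhds hU
  have hJne : J.Nonempty := by
    by_contra h
    have hzero : ∀ i, φ i x₀ = 0 := by
      intro i
      by_contra hne
      exact h ⟨i, hsub x₀ hx₀U i hne⟩
    have h1 := hφsum x₀
    rw [finsum_eq_zero_of_forall_eq_zero hzero] at h1
    exact zero_ne_one h1
  obtain ⟨k, hk⟩ : ∃ k, J.card = k + 1 :=
    ⟨J.card - 1, (Nat.succ_pred_eq_of_pos (Finset.card_pos.2 hJne)).symm⟩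
  set j := J.orderEmbOfFin hk with hjdef
  have hsum1 : ∀ x ∈ U, ∑ m : Fin (k+1), φ (j m) x = 1 := by
    intro x hx
    have h1 : ∑ᶠ i, φ i x = ∑ i ∈ J, φ i x :=
      finsum_eq_sum_of_support_subset _ (fun i hi => hsub x hx i hi)
    have h2 : ∑ m : Fin (k+1), φ (j m) x = ∑ i ∈ J, φ i x := by
      rw [← Finset.sum_coe_sort J (fun i => φ i x)]
      exact Fintype.sum_equiv (J.orderIsoOfFin hk) _ _
        (fun m => by simp [Finset.coe_orderIsoOfFin_apply, hjdef])
    rw [h2, ← h1, hφsum x]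
  have hkey : ∀ x ∈ U, ∀ y : Y,
      f (x, y) = lambdaIter lam k (fun m => g (j m) y) (fun m => φ (j m) x) := by
    intro x hx y
    set a : Fin (k+1) → ℝ := fun m => φ (j m) x with ha
    set s : Finset (Fin (k+1)) := Finset.univ.filter (fun m => a m ≠ 0) with hs
    have hsne : s.Nonempty := by
      by_contra h
      have hzero : ∀ m, a m = 0 := by
        intro m
        by_contra hne
        exact h ⟨m, by rw [hs, Finset.mem_filter]; exact ⟨Finset.mem_univ _, hne⟩⟩
      have h1 := hsum1 x hx
      rw [Finset.sum_congr rfl (fun m _ => hzero m), Finset.sum_const, smul_zero] at h1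
      exact zero_ne_one h1
    obtain ⟨l, hl⟩ : ∃ l, s.card = l + 1 :=
      ⟨s.card - 1, (Nat.succ_pred_eq_of_pos (Finset.card_pos.2 hsne)).symm⟩
    set e := s.orderEmbOfFin hl with hedef
    have hes : ∀ m, e m ∈ s := fun m => Finset.orderEmbOfFin_mem s hl m
    have hrange : ∀ m, a m ≠ 0 ↔ ∃ i, e i = m := by
      intro m
      constructor
      · intro hm
        have : m ∈ s := by rw [hs, Finset.mem_filter]; exact ⟨Finset.mem_univ _, hm⟩
        have : m ∈ Set.range ⇑e := by rw [hedef, Finset.range_orderEmbOfFin]; exact this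
        exact this
      · rintro ⟨i, rfl⟩
        have := hes i
        rw [hs, Finset.mem_filter] at this
        exact this.2
    have hsum2 : ∑ m, a m = 1 := hsum1 x hx
    have hnn : ∀ m, 0 ≤ a m := fun m => (hφ01 _ _).1
    have hmain := lambdaIter_sub hlam.map_zero hlam.map_one k l
      (fun m => g (j m) y) a hnn hsum2 ⇑e e.strictMono hrange
    have hjrange : ∀ i, φ i x ≠ 0 → ∃ m : Fin (k+1), j m = i := by
      intro i hi
      have : i ∈ Set.range ⇑j := by
        rw [hjdef, Finset.range_orderEmbOfFin]
        exact hsub x hx i hi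
      exact this
    have happ := hf x y l (fun i => j (e i)) (j.strictMono.comp e.strictMono)
      (fun m => by
        have := hes m
        rw [hs, Finset.mem_filter] at this
        exact this.2)
      (fun i hi => by
        obtain ⟨m', hm'⟩ := hjrange i hi
        have ham' : a m' ≠ 0 := by rw [ha]; simp only; rw [hm']; exact hi
        obtain ⟨i', hi'⟩ := (hrange m').1 ham'
        exact ⟨i', by show (j (e i') : I) = i; rw [hi', hm']⟩)
    rw [happ, hmain]
    rfl
  have hΦ : Continuous (fun p : X × Y =>
      (((fun m : Fin (k+1) => g (j m) p.2) : Fin (k+1) → Z),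
       ((fun m : Fin (k+1) => φ (j m) p.1) : Fin (k+1) → ℝ))) := by
    refine Continuous.prodMk ?_ ?_
    · exact continuous_pi fun m => (hg (j m)).comp continuous_snd
    · exact continuous_pi fun m => (hφc (j m)).comp continuous_fst
  have hH := lambdaIter_continuousOn hlam k
  have hmapsto : MapsTo (fun p : X × Y =>
      (((fun m : Fin (k+1) => g (j m) p.2) : Fin (k+1) → Z),
       ((fun m : Fin (k+1) => φ (j m) p.1) : Fin (k+1) → ℝ)))
      (U ×ˢ (univ : Set Y))
      {p : (Fin (k+1) → Z) × (Fin (k+1) → ℝ) | (∀ m, 0 ≤ p.2 m) ∧ ∑ m, p.2 m = 1} :=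
    fun p hp => ⟨fun m => (hφ01 _ _).1, hsum1 p.1 hp.1⟩
  have hcwa0 := ContinuousWithinAt.comp
    (f := fun p : X × Y =>
      (((fun m : Fin (k+1) => g (j m) p.2) : Fin (k+1) → Z),
       ((fun m : Fin (k+1) => φ (j m) p.1) : Fin (k+1) → ℝ)))
    (g := fun q : (Fin (k+1) → Z) × (Fin (k+1) → ℝ) => lambdaIter lam k q.1 q.2)
    (hH _ (hmapsto (Set.mk_mem_prod hx₀U (mem_univ y₀)))) hΦ.continuousWithinAt hmapsto
  have hcwa : ContinuousWithinAt (fun p : X × Y =>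
      lambdaIter lam k (fun m => g (j m) p.2) (fun m => φ (j m) p.1))
      (U ×ˢ (univ : Set Y)) (x₀, y₀) := hcwa0
  have hUnhds : U ×ˢ (univ : Set Y) ∈ 𝓝 (x₀, y₀) := prod_mem_nhds hU univ_mem
  refine (hcwa.continuousAt hUnhds).congr ?_
  filter_upwards [hUnhds] with p hp
  exact (hkey p.1 hp.1 p.2).symm
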